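/- Let k ≥ 1 and m ≥ 2 be integers, let b₁, …, b_k be nonzero real numbers and a₁, …, a_k be real numbers, and suppose P = (b₁x₁ + ⋯ + b_kx_k)^m · (a₁x₁ + ⋯ + a_kx_k) is a nonzero polynomial. Then n(P) ≥ 2k − 1. -/

import Mathlib

open MvPolynomial Finsupp

variable {k : ℕ}

lemma coeff_mul_linear (c : Fin k → ℝ) (p : MvPolynomial (Fin k) ℝ) (d : Fin k →₀ ℕ) :
    coeff d (p * ∑ l : Fin k, C (c l) * X l) =
      ∑ l : Fin k, c l * (if d l ≠ 0 then coeff (d - Finsupp.single l 1) p else 0) := by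
  rw [Finset.mul_sum, coeff_sum]
  refine Finset.sum_congr rfl fun l _ => ?_
  rw [show p * (C (c l) * X l) = C (c l) * (p * X l) by ring, coeff_C_mul, coeff_mul_X']
  simp [Finsupp.mem_support_iff]

lemma lemA (b : Fin k → ℝ) (i : Fin k) :
    ∀ n : ℕ, coeff (Finsupp.single i n) ((∑ l : Fin k, C (b l) * X l) ^ n) = b i ^ n := by
  intro n
  induction n with
  | zero => simp
  | succ n ih =>
    rw [pow_succ, coeff_mul_linear]
    rw [Finset.sum_eq_single i]
    · have h1 : Finsupp.single i (n+1) i ≠ 0 := by simp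
      have h2 : Finsupp.single i (n+1) - Finsupp.single i 1 = Finsupp.single i n := by
        ext l; simp only [Finsupp.tsub_apply, Finsupp.single_apply]; split_ifs <;> omega
      rw [if_pos h1, h2, ih, pow_succ]; ring
    · intro l _ hl
      rw [if_neg, mul_zero]
      simp [Finsupp.single_apply, Ne.symm hl]
    · simp

lemma sub_helper (i j : Fin k) (hij : j ≠ i) (n : ℕ) :
    (Finsupp.single i (n+1) + Finsupp.single j 1) - Finsupp.single i 1
      = Finsupp.single i n + Finsupp.single j 1 ∧
    (Finsupp.single i (n+1) + Finsupp.single j 1) - Finsupp.single j 1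
      = Finsupp.single i (n+1) := by
  constructor <;>
  · ext l
    simp only [Finsupp.tsub_apply, Finsupp.add_apply, Finsupp.single_apply]
    by_cases hi : i = l <;> by_cases hj : j = l <;> simp_all

lemma lemB (b : Fin k → ℝ) (i j : Fin k) (hij : j ≠ i) :
    ∀ n : ℕ, coeff (Finsupp.single i n + Finsupp.single j 1)
        ((∑ l : Fin k, C (b l) * X l) ^ (n+1)) = (n+1 : ℕ) * b i ^ n * b j := by
  intro n
  induction n with
  | zero =>
    rw [pow_one, ← one_mul (∑ l : Fin k, C (b l) * X l), coeff_mul_linear]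
    simp only [Finsupp.single_zero, zero_add]
    rw [Finset.sum_eq_single j]
    · simp [tsub_self]
    · intro l _ hl
      rw [if_neg, mul_zero]
      simp [Finsupp.single_apply, Ne.symm hl]
    · simp
  | succ n ih =>
    rw [pow_succ, coeff_mul_linear]
    have key : ∀ l : Fin k, b l * (if ((Finsupp.single i (n+1) + Finsupp.single j 1
            : Fin k →₀ ℕ)) l ≠ 0
          then coeff ((Finsupp.single i (n+1) + Finsupp.single j 1) - Finsupp.single l 1)
            ((∑ l : Fin k, C (b l) * X l) ^ (n+1)) else 0)
        = (if l = i then b i * ((n+1 : ℕ) * b i ^ n * b j) else 0)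
          + (if l = j then b j * b i ^ (n+1) else 0) := by
      intro l
      rcases eq_or_ne i l with rfl | hi
      · have hc : ((Finsupp.single i (n+1) + Finsupp.single j 1 : Fin k →₀ ℕ)) i ≠ 0 := by
          simp [Finsupp.add_apply]
        rw [if_pos rfl, if_neg (Ne.symm hij), add_zero, if_pos hc, (sub_helper i j hij n).1, ih]
      · rcases eq_or_ne j l with rfl | hj
        · have hc : ((Finsupp.single i (n+1) + Finsupp.single j 1 : Fin k →₀ ℕ)) j ≠ 0 := by
            simp [Finsupp.add_apply, Finsupp.single_apply, hij]
          rw [if_neg hij, if_pos rfl, zero_add, if_pos hc, (sub_helper i j hij n).2, lemA]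
        · have hc : ((Finsupp.single i (n+1) + Finsupp.single j 1 : Fin k →₀ ℕ)) l = 0 := by
            simp [Finsupp.add_apply, Finsupp.single_eq_of_ne' hi, Finsupp.single_eq_of_ne' hj]
          rw [if_neg (Ne.symm hi), if_neg (Ne.symm hj), add_zero, if_neg (not_not_intro hc),
            mul_zero]
    rw [Finset.sum_congr rfl fun l _ => key l, Finset.sum_add_distrib]
    simp only [Finset.sum_ite_eq', Finset.mem_univ, if_pos]
    push_cast
    ring

lemma coeffP1 (b a : Fin k → ℝ) (i : Fin k) (n : ℕ) :
    coeff (Finsupp.single i (n+1))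
      ((∑ l : Fin k, C (b l) * X l) ^ n * (∑ l : Fin k, C (a l) * X l)) = a i * b i ^ n := by
  rw [coeff_mul_linear]
  rw [Finset.sum_eq_single i]
  · have h1 : Finsupp.single i (n+1) i ≠ 0 := by simp
    have h2 : Finsupp.single i (n+1) - Finsupp.single i 1 = Finsupp.single i n := by
      ext l; simp only [Finsupp.tsub_apply, Finsupp.single_apply]; split_ifs <;> omega
    rw [if_pos h1, h2, lemA]
  · intro l _ hl
    rw [if_neg, mul_zero]
    simp [Finsupp.single_apply, Ne.symm hl]
  · simp

lemma coeffP2 (b a : Fin k → ℝ) (i j : Fin k) (hij : j ≠ i) (n : ℕ) :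
    coeff (Finsupp.single i (n+2) + Finsupp.single j 1)
      ((∑ l : Fin k, C (b l) * X l) ^ (n+2) * (∑ l : Fin k, C (a l) * X l))
      = a i * ((n+2 : ℕ) * b i ^ (n+1) * b j) + a j * b i ^ (n+2) := by
  rw [coeff_mul_linear]
  have key : ∀ l : Fin k, a l * (if ((Finsupp.single i (n+2) + Finsupp.single j 1
          : Fin k →₀ ℕ)) l ≠ 0
        then coeff ((Finsupp.single i (n+2) + Finsupp.single j 1) - Finsupp.single l 1)
          ((∑ l : Fin k, C (b l) * X l) ^ (n+2)) else 0)
      = (if l = i then a i * ((n+2 : ℕ) * b i ^ (n+1) * b j) else 0)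
        + (if l = j then a j * b i ^ (n+2) else 0) := by
    intro l
    rcases eq_or_ne i l with rfl | hi
    · have hc : ((Finsupp.single i (n+2) + Finsupp.single j 1 : Fin k →₀ ℕ)) i ≠ 0 := by
        simp [Finsupp.add_apply]
      rw [if_pos rfl, if_neg (Ne.symm hij), add_zero, if_pos hc,
        (sub_helper i j hij (n+1)).1, lemB b i j hij (n+1)]
    · rcases eq_or_ne j l with rfl | hj
      · have hc : ((Finsupp.single i (n+2) + Finsupp.single j 1 : Fin k →₀ ℕ)) j ≠ 0 := by
          simp [Finsupp.add_apply, Finsupp.single_apply, hij]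
        rw [if_neg hij, if_pos rfl, zero_add, if_pos hc, (sub_helper i j hij (n+1)).2, lemA]
      · have hc : ((Finsupp.single i (n+2) + Finsupp.single j 1 : Fin k →₀ ℕ)) l = 0 := by
          simp [Finsupp.add_apply, Finsupp.single_eq_of_ne' hi, Finsupp.single_eq_of_ne' hj]
        rw [if_neg (Ne.symm hi), if_neg (Ne.symm hj), add_zero, if_neg (not_not_intro hc),
          mul_zero]
  rw [Finset.sum_congr rfl fun l _ => key l, Finset.sum_add_distrib]
  simp only [Finset.sum_ite_eq', Finset.mem_univ, if_pos]

lemma triple_prop (i j : Fin k) (hij : j ≠ i) (n : ℕ) (d : Fin k →₀ ℕ)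
    (hd : d = Finsupp.single i (n+2) + Finsupp.single j 1 ∨
          d = Finsupp.single j (n+2) + Finsupp.single i 1 ∨
          d = Finsupp.single j (n+3)) :
    d j ≠ 0 ∧ ∀ l, l ≠ i → l ≠ j → d l = 0 := by
  constructor
  · rcases hd with rfl | rfl | rfl <;>
      simp [Finsupp.add_apply, Finsupp.single_apply, hij, Ne.symm hij]
  · intro l hli hlj
    rcases hd with rfl | rfl | rfl <;>
      simp [Finsupp.add_apply, Finsupp.single_apply, Ne.symm hli, Ne.symm hlj]

lemma pair_lemma (n : ℕ) (b : Fin k → ℝ) (hb : ∀ i, b i ≠ 0) (a : Fin k → ℝ)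
    (i j : Fin k) (hij : j ≠ i) (hai : a i ≠ 0) :
    ∃ d1 d2 : Fin k →₀ ℕ, d1 ≠ d2 ∧
      (d1 = Finsupp.single i (n+2) + Finsupp.single j 1 ∨
       d1 = Finsupp.single j (n+2) + Finsupp.single i 1 ∨ d1 = Finsupp.single j (n+3)) ∧
      (d2 = Finsupp.single i (n+2) + Finsupp.single j 1 ∨
       d2 = Finsupp.single j (n+2) + Finsupp.single i 1 ∨ d2 = Finsupp.single j (n+3)) ∧
      coeff d1 ((∑ l : Fin k, C (b l) * X l) ^ (n+2) * (∑ l : Fin k, C (a l) * X l)) ≠ 0 ∧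
      coeff d2 ((∑ l : Fin k, C (b l) * X l) ^ (n+2) * (∑ l : Fin k, C (a l) * X l)) ≠ 0 := by
  have hn0 : (0:ℝ) ≤ (n:ℝ) := Nat.cast_nonneg n
  have factc : coeff (Finsupp.single i (n+2) + Finsupp.single j 1)
      ((∑ l : Fin k, C (b l) * X l) ^ (n+2) * (∑ l : Fin k, C (a l) * X l))
      = b i ^ (n+1) * (((n:ℝ)+2) * a i * b j + a j * b i) := by
    rw [coeffP2 b a i j hij n]; push_cast; ring
  have factd : coeff (Finsupp.single j (n+2) + Finsupp.single i 1)
      ((∑ l : Fin k, C (b l) * X l) ^ (n+2) * (∑ l : Fin k, C (a l) * X l))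
      = b j ^ (n+1) * (((n:ℝ)+2) * a j * b i + a i * b j) := by
    rw [coeffP2 b a j i (Ne.symm hij) n]; push_cast; ring
  have factt : coeff (Finsupp.single j (n+3))
      ((∑ l : Fin k, C (b l) * X l) ^ (n+2) * (∑ l : Fin k, C (a l) * X l))
      = a j * b j ^ (n+2) := coeffP1 b a j (n+2)
  have e1 : (Finsupp.single i (n+2) + Finsupp.single j 1 : Fin k →₀ ℕ) i = n+2 := by
    simp [Finsupp.add_apply, Finsupp.single_eq_of_ne' hij]
  have e2 : (Finsupp.single j (n+2) + Finsupp.single i 1 : Fin k →₀ ℕ) i = 1 := by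
    simp [Finsupp.add_apply, Finsupp.single_eq_of_ne' hij]
  have e3 : (Finsupp.single j (n+3) : Fin k →₀ ℕ) i = 0 := by
    simp [Finsupp.single_eq_of_ne' hij]
  have h12 : (Finsupp.single i (n+2) + Finsupp.single j 1 : Fin k →₀ ℕ)
      ≠ Finsupp.single j (n+2) + Finsupp.single i 1 := fun h => by
    have := DFunLike.congr_fun h i; rw [e1, e2] at this; omega
  have h13 : (Finsupp.single i (n+2) + Finsupp.single j 1 : Fin k →₀ ℕ)
      ≠ Finsupp.single j (n+3) := fun h => by
    have := DFunLike.congr_fun h i; rw [e1, e3] at this; omega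
  have h23 : (Finsupp.single j (n+2) + Finsupp.single i 1 : Fin k →₀ ℕ)
      ≠ Finsupp.single j (n+3) := fun h => by
    have := DFunLike.congr_fun h i; rw [e2, e3] at this; omega
  have hcu : coeff (Finsupp.single i (n+2) + Finsupp.single j 1)
      ((∑ l : Fin k, C (b l) * X l) ^ (n+2) * (∑ l : Fin k, C (a l) * X l)) = 0
      ↔ ((n:ℝ)+2) * a i * b j + a j * b i = 0 := by
    rw [factc, mul_eq_zero]
    simp [pow_ne_zero _ (hb i)]
  have hdv : coeff (Finsupp.single j (n+2) + Finsupp.single i 1)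
      ((∑ l : Fin k, C (b l) * X l) ^ (n+2) * (∑ l : Fin k, C (a l) * X l)) = 0
      ↔ ((n:ℝ)+2) * a j * b i + a i * b j = 0 := by
    rw [factd, mul_eq_zero]
    simp [pow_ne_zero _ (hb j)]
  have not_both : ¬(((n:ℝ)+2) * a i * b j + a j * b i = 0
      ∧ ((n:ℝ)+2) * a j * b i + a i * b j = 0) := by
    rintro ⟨hu, hv⟩
    have hz : a i * b j * (1 - ((n:ℝ)+2)^2) = 0 := by linear_combination hv - ((n:ℝ)+2) * hu
    rcases mul_eq_zero.mp hz with h | h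
    · exact mul_ne_zero hai (hb j) h
    · nlinarith
  by_cases hu : ((n:ℝ)+2) * a i * b j + a j * b i = 0
  · have haj : a j ≠ 0 := by
      intro h0
      rw [h0, zero_mul, add_zero, mul_eq_zero, mul_eq_zero] at hu
      rcases hu with (h | h) | h
      · nlinarith
      · exact hai h
      · exact hb j h
    refine ⟨_, _, h23, Or.inr (Or.inl rfl), Or.inr (Or.inr rfl), ?_, ?_⟩
    · rw [Ne, hdv]; exact fun hv => not_both ⟨hu, hv⟩
    · rw [factt]; exact mul_ne_zero haj (pow_ne_zero _ (hb j))
  · by_cases hv : ((n:ℝ)+2) * a j * b i + a i * b j = 0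
    · have haj : a j ≠ 0 := by
        intro h0
        rw [h0, mul_zero, zero_mul, zero_add, mul_eq_zero] at hv
        rcases hv with h | h
        · exact hai h
        · exact hb j h
      refine ⟨_, _, h13, Or.inl rfl, Or.inr (Or.inr rfl), ?_, ?_⟩
      · rw [Ne, hcu]; exact hu
      · rw [factt]; exact mul_ne_zero haj (pow_ne_zero _ (hb j))
    · refine ⟨_, _, h12, Or.inl rfl, Or.inr (Or.inl rfl), ?_, ?_⟩
      · rw [Ne, hcu]; exact hu
      · rw [Ne, hdv]; exact hv

theorem statement4 (k m : ℕ) (hk : 1 ≤ k) (hm : 2 ≤ m)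
    (b : Fin k → ℝ) (hb : ∀ i, b i ≠ 0) (a : Fin k → ℝ)
    (hP : ((∑ i : Fin k, C (b i) * X i) ^ m * (∑ i : Fin k, C (a i) * X i)
        : MvPolynomial (Fin k) ℝ) ≠ 0) :
    2 * k - 1 ≤
      (((∑ i : Fin k, C (b i) * X i) ^ m * (∑ i : Fin k, C (a i) * X i)
        : MvPolynomial (Fin k) ℝ).support).card := by
  classical
  obtain ⟨n, rfl⟩ : ∃ n, m = n + 2 := ⟨m - 2, by omega⟩
  set P := ((∑ i : Fin k, C (b i) * X i) ^ (n+2) * (∑ i : Fin k, C (a i) * X i)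
      : MvPolynomial (Fin k) ℝ) with hPdef
  have hA : ∃ i, a i ≠ 0 := by
    by_contra h; push_neg at h
    apply hP
    have hz : (∑ i : Fin k, C (a i) * X i : MvPolynomial (Fin k) ℝ) = 0 :=
      Finset.sum_eq_zero fun i _ => by rw [h i, map_zero, zero_mul]
    rw [hPdef, hz, mul_zero]
  obtain ⟨i, hai⟩ := hA
  set F : Fin k → Finset (Fin k →₀ ℕ) := fun j =>
    P.support ∩ {Finsupp.single i (n+2) + Finsupp.single j 1,
      Finsupp.single j (n+2) + Finsupp.single i 1, Finsupp.single j (n+3)} with hF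
  have hFsub : ∀ j, F j ⊆ P.support := fun j => Finset.inter_subset_left
  have hFprop : ∀ j, j ≠ i → ∀ d ∈ F j, d j ≠ 0 ∧ ∀ l, l ≠ i → l ≠ j → d l = 0 := by
    intro j hj d hd
    apply triple_prop i j hj n
    have := (Finset.mem_inter.mp hd).2
    simpa [Finset.mem_insert, Finset.mem_singleton] using this
  have hFcard : ∀ j, j ≠ i → 2 ≤ (F j).card := by
    intro j hj
    obtain ⟨d1, d2, hne, hm1, hm2, hc1, hc2⟩ := pair_lemma n b hb a i j hj hai
    have hd1 : d1 ∈ F j := Finset.mem_inter.mpr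
      ⟨MvPolynomial.mem_support_iff.mpr hc1, by rcases hm1 with rfl | rfl | rfl <;> simp⟩
    have hd2 : d2 ∈ F j := Finset.mem_inter.mpr
      ⟨MvPolynomial.mem_support_iff.mpr hc2, by rcases hm2 with rfl | rfl | rfl <;> simp⟩
    calc 2 = ({d1, d2} : Finset (Fin k →₀ ℕ)).card := (Finset.card_pair hne).symm
      _ ≤ (F j).card := Finset.card_le_card
          (Finset.insert_subset hd1 (Finset.singleton_subset_iff.mpr hd2))
  have hdisj : ∀ j1 ∈ Finset.univ.erase i, ∀ j2 ∈ Finset.univ.erase i,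
      j1 ≠ j2 → Disjoint (F j1) (F j2) := by
    intro j1 h1 j2 h2 hne
    rw [Finset.mem_erase] at h1 h2
    rw [Finset.disjoint_left]
    intro d hd1 hd2
    have p1 := hFprop j1 h1.1 d hd1
    have p2 := hFprop j2 h2.1 d hd2
    exact p2.1 (p1.2 j2 h2.1 (Ne.symm hne))
  have hti : Finsupp.single i (n+3) ∈ P.support := by
    rw [MvPolynomial.mem_support_iff, hPdef]
    show coeff (Finsupp.single i (n+2+1)) _ ≠ 0
    rw [coeffP1 b a i (n+2)]
    exact mul_ne_zero hai (pow_ne_zero _ (hb i))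
  have htnot : Finsupp.single i (n+3) ∉ (Finset.univ.erase i).biUnion F := by
    rw [Finset.mem_biUnion]
    rintro ⟨j, hj, hmem⟩
    rw [Finset.mem_erase] at hj
    exact (hFprop j hj.1 _ hmem).1 (by simp [Finsupp.single_eq_of_ne' (Ne.symm hj.1)])
  have hSsub : insert (Finsupp.single i (n+3)) ((Finset.univ.erase i).biUnion F)
      ⊆ P.support := by
    rw [Finset.insert_subset_iff]
    exact ⟨hti, Finset.biUnion_subset.mpr fun j _ => hFsub j⟩
  have hcard : 2 * k - 1 ≤
      (insert (Finsupp.single i (n+3)) ((Finset.univ.erase i).biUnion F)).card := by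
    rw [Finset.card_insert_of_notMem htnot, Finset.card_biUnion hdisj]
    have hsum : ∑ j ∈ Finset.univ.erase i, 2 ≤ ∑ j ∈ Finset.univ.erase i, (F j).card :=
      Finset.sum_le_sum fun j hj => hFcard j (Finset.mem_erase.mp hj).1
    have hce : (Finset.univ.erase i).card = k - 1 := by
      rw [Finset.card_erase_of_mem (Finset.mem_univ i), Finset.card_univ, Fintype.card_fin]
    rw [Finset.sum_const, smul_eq_mul, hce] at hsum
    omega
  exact le_trans hcard (Finset.card_le_card hSsub)
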